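/- arXiv:1504.02805 — 5 statements merged into one kernel-verified Lean document; each statement's English description precedes it below -/
import Mathlib

section
/- For all h, g ∈ Q with h ≫ g there exists f ∈ Q such that h ≫ f and f ≫ g. -/
/-- The class `Q` of nondecreasing computable functions `h : ω → [2, ∞)`
with `h n ≥ 2 ^ n` for all `n`. -/
def MemQ (h : ℕ → ℕ) : Prop :=
  Computable h ∧ Monotone h ∧ (∀ n, 2 ≤ h n) ∧ (∀ n, 2 ^ n ≤ h n)

/-- `h ≫ g` : `h` dominates the iterates of `g` uniformly.  There is a computable
sequence `d` such that for all `k ≥ 1`, `h(n) ≥ g^(k)(n)` for all `n > d k`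
(here `g^(k)` is the `k`-fold composition of `g` with itself, `g^(1) = g`). -/
def DominatesIterates (h g : ℕ → ℕ) : Prop :=
  ∃ d : ℕ → ℕ, Computable d ∧ ∀ k : ℕ, 1 ≤ k → ∀ n : ℕ, d k < n → g^[k] n ≤ h n

/-- evaluation of iterates is computable -/
lemma aux_iterate_computable {g : ℕ → ℕ} (hg : Computable g) :
    Computable fun p : ℕ × ℕ => g^[p.1] p.2 := by
  have h := Computable.nat_rec (f := fun p : ℕ × ℕ => p.1) (g := fun p : ℕ × ℕ => p.2)
      (h := fun (_ : ℕ × ℕ) (q : ℕ × ℕ) => g q.2)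
      Computable.fst Computable.snd
      ((hg.comp (Computable.snd.comp Computable.snd)).to₂)
  refine h.of_eq fun p => ?_
  obtain ⟨k, x⟩ := p
  induction k with
  | zero => rfl
  | succ k ih =>
    show g _ = _
    rw [Function.iterate_succ_apply']
    exact congrArg g ih

/-- recursion with natural number state is computable -/
lemma aux_nat_rec_computable {z : ℕ} {s : ℕ → ℕ → ℕ}
    (hs : Computable fun p : ℕ × ℕ => s p.1 p.2) :
    Computable fun n : ℕ => Nat.rec (motive := fun _ => ℕ) z (fun k IH => s k IH) n :=
  Computable.nat_rec (f := fun n : ℕ => n) (g := fun _ : ℕ => z)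
    (h := fun (_ : ℕ) (q : ℕ × ℕ) => s q.1 q.2)
    Computable.id (Computable.const z) (hs.comp Computable.snd).to₂

lemma aux_id_le_iterate {g : ℕ → ℕ} (hgx : ∀ x, x ≤ g x) : ∀ k x, x ≤ g^[k] x := by
  intro k
  induction k with
  | zero => simp
  | succ k ih =>
    intro x
    rw [Function.iterate_succ_apply']
    exact (ih x).trans (hgx _)

lemma aux_iterate_le_iterate {g : ℕ → ℕ} (hgx : ∀ x, x ≤ g x) {a b : ℕ} (hab : a ≤ b)
    (x : ℕ) : g^[a] x ≤ g^[b] x := by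
  have : g^[(b - a) + a] x = g^[b - a] (g^[a] x) := Function.iterate_add_apply g _ _ x
  rw [Nat.sub_add_cancel hab] at this
  rw [this]
  exact aux_id_le_iterate hgx _ _

lemma aux_sq_le_pow : ∀ j : ℕ, j * (j + 1) ≤ 3 ^ j := by
  intro j
  induction j with
  | zero => norm_num
  | succ j ih =>
    rcases Nat.eq_zero_or_pos j with rfl | hj
    · norm_num
    · have h1 : (j + 1) * (j + 2) ≤ 3 * (j * (j + 1)) := by nlinarith
      calc (j + 1) * (j + 1 + 1) ≤ 3 * (j * (j + 1)) := h1
        _ ≤ 3 * 3 ^ j := by omega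
        _ = 3 ^ (j + 1) := by ring

/-- Density of `≫` on `Q`: for all `h, g ∈ Q` with `h ≫ g` there is `f ∈ Q`
with `h ≫ f ≫ g`. -/
theorem density_of_dominates_iterates (h g : ℕ → ℕ) (hh : MemQ h) (hg : MemQ g)
    (hgg : DominatesIterates h g) :
    ∃ f : ℕ → ℕ, MemQ f ∧ DominatesIterates h f ∧ DominatesIterates f g := by
  obtain ⟨hhc, hhm, hh2, hhp⟩ := hh
  obtain ⟨hgc, hgm, hg2, hgp⟩ := hg
  obtain ⟨d, hdc, hd⟩ := hgg
  -- basic growth facts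
  have hgx : ∀ x, x ≤ g x := fun x => le_trans (Nat.lt_two_pow_self (n := x)).le (hgp x)
  have hhx : ∀ x, x ≤ h x := fun x => le_trans (Nat.lt_two_pow_self (n := x)).le (hhp x)
  -- the scale H
  set H : ℕ → ℕ := fun j => Nat.rec (motive := fun _ => ℕ) 0
      (fun j IH => h^[j + 1] IH + d (3 ^ (j + 1)) + d (j + 2) + 1) j with hHdef
  have hHsucc : ∀ j, H (j + 1) = h^[j + 1] (H j) + d (3 ^ (j + 1)) + d (j + 2) + 1 :=
    fun j => rfl
  have hHstrict : ∀ j, H j < H (j + 1) := by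
    intro j
    have : H j ≤ h^[j + 1] (H j) := aux_id_le_iterate hhx _ _
    rw [hHsucc]; omega
  have hHmono : Monotone H := monotone_nat_of_le_succ fun j => (hHstrict j).le
  have hHd3 : ∀ j, 1 ≤ j → d (3 ^ j) < H j := by
    intro j hj
    cases j with
    | zero => omega
    | succ j => rw [hHsucc]; omega
  have hHd1 : ∀ j, 1 ≤ j → d (j + 1) < H j := by
    intro j hj
    cases j with
    | zero => omega
    | succ j =>
      show d (j + 2) < H (j + 1)
      rw [hHsucc]; omega
  have hHiter : ∀ j i x, i ≤ j + 1 → x ≤ H j → h^[i] x ≤ H (j + 1) := by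
    intro j i x hi hx
    have h1 : h^[i] x ≤ h^[i] (H j) := (hhm.iterate i) hx
    have h2 : h^[i] (H j) ≤ h^[j + 1] (H j) := aux_iterate_le_iterate hhx hi _
    rw [hHsucc]; omega
  -- the slow inverse m
  set m : ℕ → ℕ := fun n => Nat.rec (motive := fun _ => ℕ) 0
      (fun n IH => if H (IH + 1) < n + 1 then IH + 1 else IH) n with hmdef
  have hmsucc : ∀ n, m (n + 1) = if H (m n + 1) < n + 1 then m n + 1 else m n :=
    fun n => rfl
  have hm0 : m 0 = 0 := rfl
  -- invariant
  have hinv : ∀ n, (m n = 0 ∨ H (m n) < n) ∧ n ≤ H (m n + 1) := by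
    intro n
    induction n with
    | zero => exact ⟨Or.inl rfl, Nat.zero_le _⟩
    | succ n ih =>
      rw [hmsucc]
      by_cases hc : H (m n + 1) < n + 1
      · simp only [if_pos hc]
        refine ⟨Or.inr hc, ?_⟩
        have := hHstrict (m n + 1)
        omega
      · simp only [if_neg hc]
        refine ⟨?_, by omega⟩
        rcases ih.1 with h0 | h0
        · exact Or.inl h0
        · exact Or.inr (by omega)
  have hmmono : Monotone m := by
    refine monotone_nat_of_le_succ fun n => ?_
    rw [hmsucc]
    split <;> omega
  have hmge : ∀ k n, H k < n → k ≤ m n := by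
    intro k n hk
    by_contra hc
    push_neg at hc
    have h1 : H (m n + 1) ≤ H k := hHmono (show m n + 1 ≤ k by omega)
    have h2 := (hinv n).2
    omega
  have hmle : ∀ x t, x ≤ H t → m x ≤ t := by
    intro x t hx
    by_contra hc
    push_neg at hc
    have h1 : H (t + 1) ≤ H (m x) := hHmono (show t + 1 ≤ m x by omega)
    have h2 : H (m x) < x := by
      rcases (hinv x).1 with h0 | h0
      · omega
      · exact h0
    have h3 : H t < H (t + 1) := hHstrict t
    omega
  -- the function f
  set f : ℕ → ℕ := fun n => g^[m n + 1] n with hfdef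
  have hfx : ∀ x, x ≤ f x := fun x => aux_id_le_iterate hgx _ _
  -- computability of H
  have cadd : Computable₂ ((· + ·) : ℕ → ℕ → ℕ) := Primrec.nat_add.to_comp
  have cpow : Computable₂ ((· ^ ·) : ℕ → ℕ → ℕ) := (Primrec₂.unpaired'.1 Nat.Primrec.pow).to_comp
  have chit : Computable fun p : ℕ × ℕ => h^[p.1] p.2 := aux_iterate_computable hhc
  have cH : Computable H := by
    rw [hHdef]
    refine aux_nat_rec_computable ?_
    have c1 : Computable fun p : ℕ × ℕ => h^[p.1 + 1] p.2 :=
      chit.comp (Computable.pair (Computable.succ.comp Computable.fst) Computable.snd)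
    have c2 : Computable fun p : ℕ × ℕ => d (3 ^ (p.1 + 1)) :=
      hdc.comp (cpow.comp (Computable.const 3) (Computable.succ.comp Computable.fst))
    have c3 : Computable fun p : ℕ × ℕ => d (p.1 + 2) :=
      hdc.comp (Computable.succ.comp (Computable.succ.comp Computable.fst))
    exact cadd.comp (cadd.comp (cadd.comp c1 c2) c3) (Computable.const 1)
  -- computability of m
  have cm : Computable m := by
    rw [hmdef]
    refine aux_nat_rec_computable ?_
    have cdec : Computable fun p : ℕ × ℕ => decide (H (p.2 + 1) < p.1 + 1) := by
      have clt : Computable₂ fun a b : ℕ => decide (a < b) := Primrec.nat_lt.decide.to_comp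
      exact clt.comp (cH.comp (Computable.succ.comp Computable.snd))
        (Computable.succ.comp Computable.fst)
    have := Computable.cond cdec (Computable.succ.comp Computable.snd) Computable.snd
    refine this.of_eq fun p => ?_
    by_cases hc : H (p.2 + 1) < p.1 + 1 <;> simp [hc]
  have cf : Computable f := by
    rw [hfdef]
    exact (aux_iterate_computable hgc).comp
      (Computable.pair (Computable.succ.comp cm) Computable.id)
  -- MemQ f
  have hfQ : MemQ f := by
    refine ⟨cf, ?_, ?_, ?_⟩
    · intro a b hab
      calc f a = g^[m a + 1] a := rfl
        _ ≤ g^[m a + 1] b := (hgm.iterate _) hab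
        _ ≤ g^[m b + 1] b := aux_iterate_le_iterate hgx (by have := hmmono hab; omega) b
    · intro n
      show 2 ≤ g^[m n + 1] n
      rw [Function.iterate_succ_apply']
      exact hg2 _
    · intro n
      calc 2 ^ n ≤ g n := hgp n
        _ = g^[1] n := by rw [Function.iterate_one]
        _ ≤ g^[m n + 1] n := aux_iterate_le_iterate hgx (by omega) n
  -- f dominates iterates of g
  have hfg : DominatesIterates f g := by
    refine ⟨H, cH, fun k hk n hn => ?_⟩
    have hmn : k ≤ m n := hmge k n hn
    exact aux_iterate_le_iterate hgx (by omega) n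
  -- key pointwise bound : f x ≤ h x whenever m x ≥ 1
  have hkey : ∀ x, 1 ≤ m x → f x ≤ h x := by
    intro x hx
    have h1 : H (m x) < x := by
      rcases (hinv x).1 with h0 | h0
      · omega
      · exact h0
    have h2 : d (m x + 1) < H (m x) := hHd1 _ hx
    exact hd (m x + 1) (by omega) x (by omega)
  -- h dominates iterates of f
  have hhf : DominatesIterates h f := by
    refine ⟨fun k => H (k + 2), cH.comp (Computable.succ.comp Computable.succ),
      fun k hk n hn => ?_⟩
    set j := m n with hj
    have hjk : k + 2 ≤ j := hmge (k + 2) n hn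
    have hn1 : n ≤ H (j + 1) := (hinv n).2
    have hHjn : H j < n := by
      rcases (hinv n).1 with h0 | h0
      · omega
      · exact h0
    -- orbit stays below h-orbit
    have horb : ∀ i, i ≤ k → f^[i] n ≤ h^[i] n := by
      intro i hi
      induction i with
      | zero => simp
      | succ i ih =>
        have hi' : i ≤ k := by omega
        have hm1 : 1 ≤ m (f^[i] n) := by
          have h1 : n ≤ f^[i] n := aux_id_le_iterate hfx i n
          have := hmmono h1
          omega
        calc f^[i + 1] n = f (f^[i] n) := Function.iterate_succ_apply' f i n
          _ ≤ h (f^[i] n) := hkey _ hm1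
          _ ≤ h (h^[i] n) := hhm (ih hi')
          _ = h^[i + 1] n := (Function.iterate_succ_apply' h i n).symm
    -- orbit is bounded by H (j + 2)
    have hbound : ∀ i, i ≤ k → f^[i] n ≤ H (j + 2) := by
      intro i hi
      calc f^[i] n ≤ h^[i] n := horb i hi
        _ ≤ H (j + 1 + 1) := hHiter (j + 1) i n (by omega) hn1
        _ = H (j + 2) := rfl
    -- m is at most j + 2 along the orbit
    have hmorb : ∀ i, i ≤ k → m (f^[i] n) ≤ j + 2 := fun i hi =>
      hmle _ _ (hbound i hi)
    -- total iteration count bound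
    have hcount : ∀ i, i ≤ k → f^[i] n ≤ g^[i * (j + 3)] n := by
      intro i hi
      induction i with
      | zero => simp
      | succ i ih =>
        have hi' : i ≤ k := by omega
        calc f^[i + 1] n = f (f^[i] n) := Function.iterate_succ_apply' f i n
          _ = g^[m (f^[i] n) + 1] (f^[i] n) := rfl
          _ ≤ g^[j + 3] (f^[i] n) := aux_iterate_le_iterate hgx
              (by have := hmorb i hi'; omega) _
          _ ≤ g^[j + 3] (g^[i * (j + 3)] n) := (hgm.iterate _) (ih hi')
          _ = g^[(j + 3) + i * (j + 3)] n := (Function.iterate_add_apply g _ _ n).symm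
          _ = g^[(i + 1) * (j + 3)] n := by ring_nf
    -- final count comparison
    have hfinal : k * (j + 3) ≤ 3 ^ j := by
      have h1 : j * (j + 1) ≤ 3 ^ j := aux_sq_le_pow j
      nlinarith
    calc f^[k] n ≤ g^[k * (j + 3)] n := hcount k le_rfl
      _ ≤ g^[3 ^ j] n := aux_iterate_le_iterate hgx hfinal n
      _ ≤ h n := hd (3 ^ j) (Nat.one_le_pow _ _ (by norm_num)) n
          (lt_of_le_of_lt (le_of_lt (hHd3 j (by omega))) hHjn)
  exact ⟨f, hfQ, hhf, hfg⟩
end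

section
/- (Big subset property) Let h and g be bounding functions, let B and C be sets of strings, and let σ be a string. If B ∪ C is (h+g)-big above σ, then either B is h-big above σ or C is g-big above σ. -/
/-- Strings: finite sequences of natural numbers. -/
abbrev Str := List ℕ

/-- The set of strings extending some element of `A`  (`A^≼`). -/
def above (A : Set Str) : Set Str := {τ | ∃ σ ∈ A, σ <+: τ}

/-- A set of strings is prefix-free if its elements are pairwise incomparable. -/
def PrefixFree (A : Set Str) : Prop := ∀ σ ∈ A, ∀ τ ∈ A, σ <+: τ → σ = τ

/-- `T` is a tree above `σ`: a nonempty set of extensions of `σ` closed under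
initial segments extending `σ`. -/
def IsTreeAbove (σ : Str) (T : Set Str) : Prop :=
  T.Nonempty ∧ (∀ τ ∈ T, σ <+: τ) ∧ ∀ τ ∈ T, ∀ ρ : Str, σ <+: ρ → ρ <+: τ → ρ ∈ T

/-- `T` is a forest above the prefix-free set `A`: `T ⊆ A^≼` contains `A`, and
for each `σ ∈ A`, `T ∩ σ^≼` is a tree above `σ`. -/
def IsForestAbove (A T : Set Str) : Prop :=
  A ⊆ T ∧ T ⊆ above A ∧ ∀ σ ∈ A, IsTreeAbove σ (T ∩ {τ | σ <+: τ})

/-- `τ` is a leaf (a maximal element) of `T`. -/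
def IsLeaf (T : Set Str) (τ : Str) : Prop := τ ∈ T ∧ ∀ ρ ∈ T, τ <+: ρ → ρ = τ

/-- `T` is `h`-bushy: every non-leaf `τ ∈ T` has at least `h |τ|` immediate
successors on `T`. -/
def Bushy (h : ℕ → ℕ) (T : Set Str) : Prop :=
  ∀ τ ∈ T, ¬ IsLeaf T τ →
    h τ.length ≤ {ρ ∈ T | τ <+: ρ ∧ ρ.length = τ.length + 1}.ncard

/-- `B` is `h`-big above the finite prefix-free set `A`: some finite `h`-bushy
forest above `A` has all of its leaves in `B`. -/
def BigAboveF (h : ℕ → ℕ) (A B : Set Str) : Prop :=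
  ∃ T : Set Str, T.Finite ∧ IsForestAbove A T ∧ Bushy h T ∧ ∀ τ : Str, IsLeaf T τ → τ ∈ B

/-- `B` is `h`-big above an arbitrary set `A` of strings: `B` is `h`-big above
every finite prefix-free subset of `A`. -/
def BigAbove (h : ℕ → ℕ) (A B : Set Str) : Prop :=
  ∀ A' : Set Str, A' ⊆ A → A'.Finite → PrefixFree A' → BigAboveF h A' B

/-- A bounding function: a computable function into `[2, ∞)`. -/
def Bounding (h : ℕ → ℕ) : Prop := Computable h ∧ ∀ n, 2 ≤ h n

/-- The forest `R` is an end-extension of the forest `S`: every string in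
`R ∖ S` extends some leaf of `S`. -/
def EndExt (S R : Set Str) : Prop :=
  S ⊆ R ∧ ∀ τ ∈ R, τ ∉ S → ∃ ρ : Str, IsLeaf S ρ ∧ ρ <+: τ

lemma prefix_antisymm {l₁ l₂ : Str} (a : l₁ <+: l₂) (b : l₂ <+: l₁) : l₁ = l₂ :=
  a.eq_of_length (le_antisymm a.length_le b.length_le)

lemma forest_singleton {σ : Str} {T : Set Str} :
    IsForestAbove {σ} T ↔
      (σ ∈ T ∧ (∀ τ ∈ T, σ <+: τ) ∧ ∀ τ ∈ T, ∀ ρ : Str, σ <+: ρ → ρ <+: τ → ρ ∈ T) := by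
  constructor
  · rintro ⟨h1, h2, h3⟩
    have hsub : ∀ τ ∈ T, σ <+: τ := by
      intro τ hτ
      rcases h2 hτ with ⟨σ', hσ', hp⟩
      rcases hσ' with rfl
      exact hp
    have htree := h3 σ rfl
    refine ⟨h1 rfl, hsub, ?_⟩
    intro τ hτ ρ hp1 hp2
    exact (htree.2.2 τ ⟨hτ, hsub τ hτ⟩ ρ hp1 hp2).1
  · rintro ⟨h1, h2, h3⟩
    refine ⟨by simpa using h1, fun τ hτ => ⟨σ, rfl, h2 τ hτ⟩, ?_⟩
    rintro σ' rfl
    have heq : T ∩ {τ | σ' <+: τ} = T := by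
      apply Set.inter_eq_self_of_subset_left
      intro τ hτ; exact h2 τ hτ
    rw [heq]
    exact ⟨⟨σ', h1⟩, h2, h3⟩

lemma big_single (h : ℕ → ℕ) {B : Set Str} {τ : Str} (hτ : τ ∈ B) : BigAboveF h {τ} B := by
  refine ⟨{τ}, Set.finite_singleton τ, ?_, ?_, ?_⟩
  · rw [forest_singleton]
    refine ⟨rfl, ?_, ?_⟩
    · rintro x rfl; exact List.prefix_rfl
    · rintro x rfl ρ h1 h2
      exact prefix_antisymm h2 h1
  · rintro x rfl hnl
    exact absurd ⟨rfl, by rintro ρ rfl _; rfl⟩ hnl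
  · rintro x ⟨rfl, _⟩
    · exact hτ

/-- Glue lemma -/
lemma glue (h : ℕ → ℕ) (B : Set Str) (τ : Str) (S : Set Str) (hSfin : S.Finite)
    (hSne : S.Nonempty)
    (hSext : ∀ ρ ∈ S, τ <+: ρ ∧ ρ.length = τ.length + 1)
    (hScard : h τ.length ≤ S.ncard)
    (hbig : ∀ ρ ∈ S, BigAboveF h {ρ} B) :
    BigAboveF h {τ} B := by
  have hτS : ∀ ρ ∈ S, τ ≠ ρ := by
    intro ρ hρ hEq
    have := (hSext ρ hρ).2
    rw [← hEq] at this; omega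
  have key : ∀ ρ : S, ∃ T' : Set Str, T'.Finite ∧ (ρ.1 ∈ T' ∧ (∀ x ∈ T', ρ.1 <+: x) ∧
      ∀ x ∈ T', ∀ π : Str, ρ.1 <+: π → π <+: x → π ∈ T') ∧ Bushy h T' ∧
      ∀ x : Str, IsLeaf T' x → x ∈ B := by
    rintro ⟨ρ, hρ⟩
    obtain ⟨T', h1, h2, h3, h4⟩ := hbig ρ hρ
    exact ⟨T', h1, forest_singleton.mp h2, h3, h4⟩
  choose f hfin hforest hbushy hleaf using key
  haveI : Finite S := hSfin.to_subtype
  set T' : Set Str := insert τ (⋃ ρ : S, f ρ) with hT'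
  -- basic facts
  have hmemf : ∀ ρ : S, ∀ x ∈ f ρ, ρ.1 <+: x := fun ρ => (hforest ρ).2.1
  have hρf : ∀ ρ : S, ρ.1 ∈ f ρ := fun ρ => (hforest ρ).1
  have hdisj : ∀ (ρ ρ' : S) (y : Str), ρ.1 <+: y → ρ'.1 <+: y → ρ = ρ' := by
    intro ρ ρ' y h1 h2
    have hl : ρ.1.length = ρ'.1.length := by
      rw [(hSext ρ.1 ρ.2).2, (hSext ρ'.1 ρ'.2).2]
    rcases List.prefix_or_prefix_of_prefix h1 h2 with hp | hp
    · exact Subtype.ext (hp.eq_of_length hl)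
    · exact Subtype.ext (hp.eq_of_length hl.symm).symm
  have hextτ : ∀ x ∈ T', τ <+: x := by
    rintro x (rfl | hx)
    · exact List.prefix_rfl
    · simp only [Set.mem_iUnion] at hx
      obtain ⟨ρ, hρ⟩ := hx
      exact (hSext ρ.1 ρ.2).1.trans (hmemf ρ x hρ)
  have hTfin : T'.Finite := (Set.finite_iUnion hfin).insert τ
  -- membership of f ρ elements in T'
  have hsubT : ∀ ρ : S, f ρ ⊆ T' := by
    intro ρ x hx
    exact Set.mem_insert_of_mem _ (Set.mem_iUnion.mpr ⟨ρ, hx⟩)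
  -- τ is not in any f ρ
  have hτnot : ∀ ρ : S, τ ∉ f ρ := by
    intro ρ hmem
    have := (hmemf ρ τ hmem).length_le
    have := (hSext ρ.1 ρ.2).2
    omega
  refine ⟨T', hTfin, ?_, ?_, ?_⟩
  · rw [forest_singleton]
    refine ⟨Set.mem_insert τ _, hextτ, ?_⟩
    rintro x hx π hπ1 hπ2
    rcases hx with rfl | hx
    · exact (prefix_antisymm hπ2 hπ1) ▸ Set.mem_insert _ _
    · simp only [Set.mem_iUnion] at hx
      obtain ⟨ρ, hρ⟩ := hx
      have hρx := hmemf ρ x hρ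
      rcases List.prefix_or_prefix_of_prefix hπ2 hρx with hp | hp
      · -- π <+: ρ: then π = τ or π = ρ
        have h1 := hπ1.length_le
        have h2 := hp.length_le
        have hρl := (hSext ρ.1 ρ.2).2
        rcases Nat.lt_or_ge π.length (τ.length + 1) with hlt | hge
        · have : π = τ := (hπ1.eq_of_length (by omega)).symm
          exact this ▸ Set.mem_insert _ _
        · have : π = ρ.1 := hp.eq_of_length (by omega)
          exact hsubT ρ (this ▸ hρf ρ)
      · exact hsubT ρ ((hforest ρ).2.2 x hρ π hp hπ2)
  · -- Bushy
    intro x hx hnl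
    rcases hx with rfl | hx
    · -- x = τ: children include S
      have hsub2 : S ⊆ {ρ ∈ T' | x <+: ρ ∧ ρ.length = x.length + 1} := by
        intro ρ hρ
        exact ⟨hsubT ⟨ρ, hρ⟩ (hρf ⟨ρ, hρ⟩), (hSext ρ hρ).1, (hSext ρ hρ).2⟩
      calc h x.length ≤ S.ncard := hScard
        _ ≤ _ := Set.ncard_le_ncard hsub2 (hTfin.subset (Set.sep_subset _ _))
    · simp only [Set.mem_iUnion] at hx
      obtain ⟨ρ, hρ⟩ := hx
      -- x is a non-leaf of f ρ
      have hnl' : ¬ IsLeaf (f ρ) x := by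
        intro hlf
        apply hnl
        refine ⟨hsubT ρ hρ, ?_⟩
        rintro y hy hxy
        rcases hy with rfl | hy
        · have := (hextτ x (hsubT ρ hρ)).length_le
          have := hxy.length_le
          exact (prefix_antisymm (hextτ x (hsubT ρ hρ)) hxy)
        · simp only [Set.mem_iUnion] at hy
          obtain ⟨ρ', hρ'⟩ := hy
          have : ρ = ρ' := hdisj ρ ρ' y ((hmemf ρ x hρ).trans hxy) (hmemf ρ' y hρ')
          subst this
          exact hlf.2 y hρ' hxy
      have hch : {π ∈ f ρ | x <+: π ∧ π.length = x.length + 1} ⊆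
          {π ∈ T' | x <+: π ∧ π.length = x.length + 1} := by
        rintro π ⟨h1, h2⟩
        exact ⟨hsubT ρ h1, h2⟩
      calc h x.length ≤ _ := hbushy ρ x hρ hnl'
        _ ≤ _ := Set.ncard_le_ncard hch (hTfin.subset (Set.sep_subset _ _))
  · -- leaves in B
    rintro x ⟨hx, hmax⟩
    rcases hx with rfl | hx
    · exfalso
      obtain ⟨ρ, hρ⟩ := hSne
      have := hmax ρ (hsubT ⟨ρ, hρ⟩ (hρf ⟨ρ, hρ⟩)) (hSext ρ hρ).1
      exact hτS ρ hρ this.symm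
    · simp only [Set.mem_iUnion] at hx
      obtain ⟨ρ, hρ⟩ := hx
      apply hleaf ρ
      exact ⟨hρ, fun y hy hxy => hmax y (hsubT ρ hy) hxy⟩

/-- Big subset property: if `B ∪ C` is `(h+g)`-big above the string `σ`, then
`B` is `h`-big above `σ` or `C` is `g`-big above `σ`. -/
theorem big_subset_property (h g : ℕ → ℕ) (hh : Bounding h) (hg : Bounding g)
    (B C : Set Str) (σ : Str)
    (hbig : BigAboveF (fun n => h n + g n) {σ} (B ∪ C)) :
    BigAboveF h {σ} B ∨ BigAboveF g {σ} C := by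
  obtain ⟨T, hTfin, hTforest, hTbushy, hTleaf⟩ := hbig
  obtain ⟨hσT, hText, hTclosed⟩ := forest_singleton.mp hTforest
  obtain ⟨N, hN⟩ : ∃ N, ∀ τ ∈ T, τ.length ≤ N := by
    obtain ⟨N, hN⟩ := (hTfin.image List.length).bddAbove
    exact ⟨N, fun τ hτ => hN ⟨τ, hτ, rfl⟩⟩
  have leafcase : ∀ τ ∈ T, IsLeaf T τ → BigAboveF h {τ} B ∨ BigAboveF g {τ} C := by
    intro τ hτ hleaf
    rcases hTleaf τ hleaf with hB | hC
    · exact Or.inl (big_single h hB)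
    · exact Or.inr (big_single g hC)
  have main : ∀ n, ∀ τ ∈ T, N - τ.length ≤ n → BigAboveF h {τ} B ∨ BigAboveF g {τ} C := by
    intro n
    induction n with
    | zero =>
      intro τ hτ hlen
      by_cases hleaf : IsLeaf T τ
      · exact leafcase τ hτ hleaf
      · exfalso
        have hcard : h τ.length + g τ.length ≤ {ρ ∈ T | τ <+: ρ ∧ ρ.length = τ.length + 1}.ncard := hTbushy τ hτ hleaf
        have hKfin : {ρ ∈ T | τ <+: ρ ∧ ρ.length = τ.length + 1}.Finite :=
          hTfin.subset (Set.sep_subset _ _)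
        have hne : {ρ ∈ T | τ <+: ρ ∧ ρ.length = τ.length + 1}.Nonempty := by
          apply Set.nonempty_of_ncard_ne_zero
          have := hh.2 τ.length
          omega
        obtain ⟨ρ, hρT, _, hρl⟩ := hne
        have := hN ρ hρT
        have := hN τ hτ
        omega
    | succ n ih =>
      intro τ hτ hlen
      by_cases hleaf : IsLeaf T τ
      · exact leafcase τ hτ hleaf
      set K := {ρ ∈ T | τ <+: ρ ∧ ρ.length = τ.length + 1} with hK
      have hKfin : K.Finite := hTfin.subset (Set.sep_subset _ _)
      have hcard : h τ.length + g τ.length ≤ K.ncard := hTbushy τ hτ hleaf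
      have hIH : ∀ ρ ∈ K, BigAboveF h {ρ} B ∨ BigAboveF g {ρ} C := by
        rintro ρ ⟨hρT, _, hρl⟩
        have := hN ρ hρT
        exact ih ρ hρT (by omega)
      set KB := {ρ ∈ K | BigAboveF h {ρ} B} with hKB
      set KC := {ρ ∈ K | BigAboveF g {ρ} C} with hKC
      have hunion : K = KB ∪ KC := by
        apply Set.Subset.antisymm
        · intro ρ hρ
          rcases hIH ρ hρ with hb | hc
          · exact Or.inl ⟨hρ, hb⟩
          · exact Or.inr ⟨hρ, hc⟩
        · rintro ρ (⟨hρ, _⟩ | ⟨hρ, _⟩) <;> exact hρ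
      have hle : K.ncard ≤ KB.ncard + KC.ncard := hunion ▸ Set.ncard_union_le _ _
      have hor : h τ.length ≤ KB.ncard ∨ g τ.length ≤ KC.ncard := by omega
      rcases hor with hB' | hC'
      · left
        apply glue h B τ KB (hKfin.subset (Set.sep_subset _ _)) ?_ ?_ hB' ?_
        · apply Set.nonempty_of_ncard_ne_zero
          have := hh.2 τ.length; omega
        · rintro ρ ⟨⟨_, hp, hl⟩, _⟩; exact ⟨hp, hl⟩
        · rintro ρ ⟨_, hb⟩; exact hb
      · right
        apply glue g C τ KC (hKfin.subset (Set.sep_subset _ _)) ?_ ?_ hC' ?_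
        · apply Set.nonempty_of_ncard_ne_zero
          have := hg.2 τ.length; omega
        · rintro ρ ⟨⟨_, hp, hl⟩, _⟩; exact ⟨hp, hl⟩
        · rintro ρ ⟨_, hc⟩; exact hc
  exact main N σ hσT (Nat.sub_le _ _)
end

section
/- Let g, h ∈ Q, let Γ be a Turing functional with binary output (a monotone map from strings to binary strings), and let B be a set of strings. Suppose that: τ and τ* are strings; A is a finite prefix-free set of extensions of τ which is 3g-big above τ; for each ρ ∈ A, E_{ρ,0} and E_{ρ,1} are finite sets of extensions of ρ, each 3g-big above ρ, and E_{ρ,0}, E_{ρ,1} Γ-split mod B; and F is a finite set of strings, 3h-big above τ*, such that |Γ(σ)| > |Γ(ν)| for all σ ∈ F ∖ B and all ν ∈ E ∖ B, where E is the union of all the E_{ρ,i} (ρ ∈ A, i < 2). Then there are E' ⊆ E which is g-big above τ, and F' ⊆ F which is h-big above τ*, such that E' and F' Γ-split mod B. -/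
/-- `A₀` and `A₁` `Γ`-split mod `B`: `Γ τ₀` and `Γ τ₁` are incomparable binary
strings for all `τ₀ ∈ A₀ ∖ B` and `τ₁ ∈ A₁ ∖ B`. -/
def GammaSplit (Γ : Str → List Bool) (B A₀ A₁ : Set Str) : Prop :=
  ∀ τ₀ ∈ A₀, τ₀ ∉ B → ∀ τ₁ ∈ A₁, τ₁ ∉ B →
    ¬ Γ τ₀ <+: Γ τ₁ ∧ ¬ Γ τ₁ <+: Γ τ₀

namespace SCL

/-- trivial singleton witness -/
lemma big_singleton {f : ℕ → ℕ} {σ : Str} {X : Set Str} (hσ : σ ∈ X) :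
    BigAboveF f {σ} X := by
  refine ⟨{σ}, Set.finite_singleton σ, ⟨subset_rfl, ?_, ?_⟩, ?_, ?_⟩
  · intro t ht
    exact ⟨σ, rfl, by rcases ht with rfl; exact List.prefix_refl _⟩
  · intro s hs
    rcases hs with rfl
    refine ⟨⟨s, by simp⟩, ?_, ?_⟩
    · rintro t ⟨ht, -⟩; rcases ht with rfl; exact List.prefix_refl t
    · rintro t ⟨ht, -⟩ ρ h1 h2
      rcases ht with rfl
      have : ρ = t := h2.eq_of_length (le_antisymm h2.length_le h1.length_le)
      subst this
      exact ⟨rfl, h1⟩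
  · intro t ht hnl
    exfalso; apply hnl
    rcases ht with rfl
    exact ⟨rfl, fun ρ hρ _ => hρ⟩
  · intro t hl
    rcases hl.1 with rfl; exact hσ

lemma big_mono_set {f : ℕ → ℕ} {σ : Str} {X X' : Set Str} (h : X ⊆ X') :
    BigAboveF f {σ} X → BigAboveF f {σ} X' := by
  rintro ⟨T, h1, h2, h3, h4⟩
  exact ⟨T, h1, h2, h3, fun t ht => h (h4 t ht)⟩

lemma big_mono_fun {f f' : ℕ → ℕ} {σ : Str} {X : Set Str} (hle : ∀ n, f' n ≤ f n) :
    BigAboveF f {σ} X → BigAboveF f' {σ} X := by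
  rintro ⟨T, h1, h2, h3, h4⟩
  exact ⟨T, h1, h2, fun t ht hnl => le_trans (hle _) (h3 t ht hnl), h4⟩

lemma exists_leaf {T : Set Str} (hfin : T.Finite) (hne : T.Nonempty) :
    ∃ ℓ, IsLeaf T ℓ := by
  obtain ⟨a, ha, hmax⟩ := hfin.exists_maximalFor List.length T hne
  refine ⟨a, ha, fun ρ hρ hpre => ?_⟩
  exact (hpre.eq_of_length (le_antisymm hpre.length_le (hmax hρ hpre.length_le))).symm

lemma big_nonempty {f : ℕ → ℕ} {σ : Str} {X : Set Str} (h : BigAboveF f {σ} X) :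
    X.Nonempty := by
  obtain ⟨T, h1, h2, _, h4⟩ := h
  obtain ⟨ℓ, hℓ⟩ := exists_leaf h1 ⟨σ, h2.1 rfl⟩
  exact ⟨ℓ, h4 ℓ hℓ⟩

/-- descending induction on a finite tree -/
lemma tree_induction {T : Set Str} (hfin : T.Finite) {σ : Str}
    (hfor : IsForestAbove {σ} T) (P : Str → Prop)
    (hleaf : ∀ t, IsLeaf T t → P t)
    (hstep : ∀ t ∈ T, ¬ IsLeaf T t →
      (∀ c ∈ T, t <+: c → c.length = t.length + 1 → P c) → P t) :
    ∀ t ∈ T, P t := by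
  classical
  set M := hfin.toFinset.sup List.length with hM
  have hbound : ∀ t ∈ T, t.length ≤ M := by
    intro t ht
    exact Finset.le_sup (f := List.length) (by simpa using ht)
  have key : ∀ n, ∀ t ∈ T, M < t.length + n → P t := by
    intro n
    induction n with
    | zero =>
      intro t ht hlt
      exact absurd (hbound t ht) (by omega)
    | succ n ih =>
      intro t ht hlt
      by_cases hl : IsLeaf T t
      · exact hleaf t hl
      · exact hstep t ht hl (fun c hc hpre hlen => ih c hc (by omega))
  intro t ht
  exact key (M + 1) t ht (by omega)

/-- attach witnesses above at least `f t.length` immediate successors of `t` -/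
lemma big_of_children {f : ℕ → ℕ} {t : Str} {X : Set Str} {I : Set Str}
    (hIfin : I.Finite)
    (hext : ∀ c ∈ I, t <+: c ∧ c.length = t.length + 1)
    (hbig : ∀ c ∈ I, BigAboveF f {c} X)
    (hcard : f t.length ≤ I.ncard)
    (hf1 : 1 ≤ f t.length) :
    BigAboveF f {t} X := by
  classical
  choose! S hS1 hS2 hS3 hS4 using hbig
  set SS : Set Str := {t} ∪ ⋃ c ∈ I, S c with hSSdef
  have hfinSS : SS.Finite :=
    (Set.finite_singleton t).union (hIfin.biUnion (fun c hc => hS1 c hc))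
  have fact0 : ∀ c ∈ I, c ∈ S c := fun c hc => (hS2 c hc).1 rfl
  have fact1 : ∀ c ∈ I, ∀ x ∈ S c, c <+: x := by
    intro c hc x hx
    obtain ⟨s, hs, hp⟩ := (hS2 c hc).2.1 hx
    rcases hs with rfl; exact hp
  have fact2 : ∀ c ∈ I, ∀ c' ∈ I, ∀ x : Str, c <+: x → c' <+: x → c = c' := by
    intro c hc c' hc' x h1 h2
    have hlen : c.length = c'.length := by
      rw [(hext c hc).2, (hext c' hc').2]
    rcases List.prefix_or_prefix_of_prefix h1 h2 with hp | hp
    · exact hp.eq_of_length hlen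
    · exact (hp.eq_of_length hlen.symm).symm
  have memSS : ∀ c ∈ I, ∀ x ∈ S c, x ∈ SS := by
    intro c hc x hx
    exact Or.inr (Set.mem_biUnion hc hx)
  have fact3 : ∀ c ∈ I, ∀ x ∈ S c, ∀ y ∈ SS, x <+: y → y ∈ S c := by
    intro c hc x hx y hy hxy
    rcases hy with hy | hy
    · exfalso
      rcases hy with rfl
      have h1 : c.length ≤ x.length := (fact1 c hc x hx).length_le
      have h2 : x.length ≤ y.length := hxy.length_le
      have := (hext c hc).2
      omega
    · obtain ⟨c', hc', hy'⟩ := Set.mem_iUnion₂.mp hy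
      have : c = c' := fact2 c hc c' hc' y ((fact1 c hc x hx).trans hxy) (fact1 c' hc' y hy')
      exact this ▸ hy'
  have hSSext : ∀ x ∈ SS, t <+: x := by
    intro x hx
    rcases hx with hx | hx
    · rcases hx with rfl; exact List.prefix_refl _
    · obtain ⟨c, hc, hx'⟩ := Set.mem_iUnion₂.mp hx
      exact (hext c hc).1.trans (fact1 c hc x hx')
  have htmem : t ∈ SS := Or.inl rfl
  refine ⟨SS, hfinSS, ⟨by simpa using htmem, ?_, ?_⟩, ?_, ?_⟩
  · intro x hx; exact ⟨t, rfl, hSSext x hx⟩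
  · intro s hs
    rcases hs with rfl
    refine ⟨⟨s, htmem, List.prefix_refl _⟩, ?_, ?_⟩
    · rintro x ⟨-, hx⟩; exact hx
    · rintro x ⟨hx, -⟩ ρ h1 h2
      refine ⟨?_, h1⟩
      rcases hx with hx | hx
      · rcases hx with rfl
        have : ρ = x := h2.eq_of_length (le_antisymm h2.length_le h1.length_le)
        exact this ▸ htmem
      · obtain ⟨c, hc, hx'⟩ := Set.mem_iUnion₂.mp hx
        have hcx : c <+: x := fact1 c hc x hx'
        rcases List.prefix_or_prefix_of_prefix h2 hcx with hp | hp
        · -- ρ <+: c : so ρ = t or ρ = c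
          have l1 : s.length ≤ ρ.length := h1.length_le
          have l2 : ρ.length ≤ c.length := hp.length_le
          have l3 : c.length = s.length + 1 := (hext c hc).2
          rcases (by omega : ρ.length = s.length ∨ ρ.length = c.length) with hl | hl
          · have : s = ρ := h1.eq_of_length hl.symm
            exact this ▸ htmem
          · have : ρ = c := hp.eq_of_length hl
            exact this ▸ memSS c hc c (fact0 c hc)
        · -- c <+: ρ : use closure of S c
          have := ((hS2 c hc).2.2 c rfl).2.2 x ⟨hx', hcx⟩ ρ hp h2
          exact memSS c hc ρ this.1
  · -- Bushy
    intro x hx hnl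
    have hChfin : ∀ Y : Set Str, {ρ ∈ Y | x <+: ρ ∧ ρ.length = x.length + 1} ⊆ Y :=
      fun Y => Set.sep_subset _ _
    rcases hx with hx | hx
    · rcases hx with rfl
      have hsub : I ⊆ {ρ ∈ SS | x <+: ρ ∧ ρ.length = x.length + 1} := by
        intro c hc
        exact ⟨memSS c hc c (fact0 c hc), (hext c hc).1, (hext c hc).2⟩
      calc f x.length ≤ I.ncard := hcard
        _ ≤ _ := Set.ncard_le_ncard hsub (hfinSS.subset (hChfin SS))
    · obtain ⟨c, hc, hx'⟩ := Set.mem_iUnion₂.mp hx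
      have hnl' : ¬ IsLeaf (S c) x := by
        intro hL
        apply hnl
        refine ⟨memSS c hc x hx', fun ρ hρ hpre => ?_⟩
        exact hL.2 ρ (fact3 c hc x hx' ρ hρ hpre) hpre
      have hb := hS3 c hc x hx' hnl'
      have hsub : {ρ ∈ S c | x <+: ρ ∧ ρ.length = x.length + 1} ⊆
          {ρ ∈ SS | x <+: ρ ∧ ρ.length = x.length + 1} := by
        rintro ρ ⟨hρ, h2, h3⟩
        exact ⟨memSS c hc ρ hρ, h2, h3⟩
      exact le_trans hb (Set.ncard_le_ncard hsub (hfinSS.subset (hChfin SS)))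
  · -- leaves
    intro ℓ hℓ
    have hImem := hℓ.1
    rcases hImem with hl | hl
    · exfalso
      rcases hl with rfl
      have hne : I.Nonempty := Set.nonempty_of_ncard_ne_zero (by omega)
      obtain ⟨c, hc⟩ := hne
      have h1 : c = ℓ := hℓ.2 c (memSS c hc c (fact0 c hc)) (hext c hc).1
      have h2 := (hext c hc).2
      rw [h1] at h2
      omega
    · obtain ⟨c, hc, hl'⟩ := Set.mem_iUnion₂.mp hl
      refine hS4 c hc ℓ ⟨hl', fun ρ hρ hpre => ?_⟩
      exact hℓ.2 ρ (memSS c hc ρ hρ) hpre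

/-- the partition/cover lemma for bushy trees -/
lemma cover_two {W f₁ f₂ : ℕ → ℕ} {σ : Str} {X X₁ X₂ : Set Str}
    (hbig : BigAboveF W {σ} X) (hcov : X ⊆ X₁ ∪ X₂)
    (hsum : ∀ n, f₁ n + f₂ n ≤ W n + 1)
    (h1 : ∀ n, 1 ≤ f₁ n) (h2 : ∀ n, 1 ≤ f₂ n) :
    BigAboveF f₁ {σ} X₁ ∨ BigAboveF f₂ {σ} X₂ := by
  classical
  obtain ⟨T, hTfin, hTfor, hTbushy, hTleaf⟩ := hbig
  have main := tree_induction hTfin hTfor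
    (fun t => BigAboveF f₁ {t} X₁ ∨ BigAboveF f₂ {t} X₂)
    (by
      intro t ht
      rcases hcov (hTleaf t ht) with hx | hx
      · exact Or.inl (big_singleton hx)
      · exact Or.inr (big_singleton hx))
    (by
      intro t ht hnl ih
      set Ch := {ρ ∈ T | t <+: ρ ∧ ρ.length = t.length + 1} with hCh
      have hChT : Ch ⊆ T := Set.sep_subset _ _
      have hChfin : Ch.Finite := hTfin.subset hChT
      have hW : W t.length ≤ Ch.ncard := hTbushy t ht hnl
      set Ch₁ := {c ∈ Ch | BigAboveF f₁ {c} X₁} with hCh₁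
      set Ch₂ := {c ∈ Ch | BigAboveF f₂ {c} X₂} with hCh₂
      have hChcov : Ch ⊆ Ch₁ ∪ Ch₂ := by
        intro c hc
        rcases ih c (hChT hc) hc.2.1 hc.2.2 with hb | hb
        · exact Or.inl ⟨hc, hb⟩
        · exact Or.inr ⟨hc, hb⟩
      have hext₁ : ∀ Y : Set Str, ∀ c ∈ {c ∈ Ch | Y c}, t <+: c ∧ c.length = t.length + 1 := by
        rintro Y c ⟨⟨-, hp, hl⟩, -⟩
        exact ⟨hp, hl⟩
      by_cases hn1 : f₁ t.length ≤ Ch₁.ncard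
      · refine Or.inl (big_of_children (hChfin.subset (Set.sep_subset _ _))
          (fun c hc => ⟨hc.1.2.1, hc.1.2.2⟩) (fun c hc => hc.2) hn1 (h1 _))
      · have hn2 : f₂ t.length ≤ Ch₂.ncard := by
          have hle : Ch.ncard ≤ Ch₁.ncard + Ch₂.ncard :=
            le_trans (Set.ncard_le_ncard hChcov ((hChfin.subset (Set.sep_subset _ _)).union
              (hChfin.subset (Set.sep_subset _ _)))) (Set.ncard_union_le _ _)
          have := hsum t.length
          omega
        refine Or.inr (big_of_children (hChfin.subset (Set.sep_subset _ _))
          (fun c hc => ⟨hc.1.2.1, hc.1.2.2⟩) (fun c hc => hc.2) hn2 (h2 _)))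
  exact main σ (hTfor.1 rfl)

/-- gluing a forest of witnesses onto the leaves of a witness -/
lemma big_glue {gf : ℕ → ℕ} {τ : Str} {A' : Set Str} {D : Str → Set Str}
    (hA : BigAboveF gf {τ} A')
    (hD : ∀ ρ ∈ A', BigAboveF gf {ρ} (D ρ))
    (hg1 : ∀ n, 1 ≤ gf n) :
    BigAboveF gf {τ} (⋃ ρ ∈ A', D ρ) := by
  classical
  obtain ⟨T, hTfin, hTfor, hTbushy, hTleaf⟩ := hA
  have main := tree_induction hTfin hTfor
    (fun t => BigAboveF gf {t} (⋃ ρ ∈ A', D ρ))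
    (by
      intro t ht
      have htA : t ∈ A' := hTleaf t ht
      exact big_mono_set (Set.subset_biUnion_of_mem htA) (hD t htA))
    (by
      intro t ht hnl ih
      set Ch := {ρ ∈ T | t <+: ρ ∧ ρ.length = t.length + 1} with hCh
      have hChT : Ch ⊆ T := Set.sep_subset _ _
      exact big_of_children (hTfin.subset hChT) (fun c hc => ⟨hc.2.1, hc.2.2⟩)
        (fun c hc => ih c (hChT hc) hc.2.1 hc.2.2) (hTbushy t ht hnl) (hg1 _))
  exact main τ (hTfor.1 rfl)

/-- prefixes of a fixed list form a finite set -/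
lemma finite_prefixes (l : List Bool) : {q : List Bool | q <+: l}.Finite := by
  apply Set.Finite.subset (Set.finite_range (fun k : Fin (l.length + 1) => l.take k.val))
  intro q hq
  refine ⟨⟨q.length, by have := hq.length_le; omega⟩, ?_⟩
  exact (List.prefix_iff_eq_take.mp hq).symm

end SCL

/-- The combinatorial splitting lemma (Kumabe–Lewis, Lemma 6.2, mod `B`). -/
theorem splitting_combinatorial_lemma (g h : ℕ → ℕ) (hg : MemQ g) (hh : MemQ h)
    (Γ : Str → List Bool) (hΓ : Computable Γ)
    (hmono : ∀ σ τ : Str, σ <+: τ → Γ σ <+: Γ τ)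
    (B : Set Str) (τ τs : Str)
    (A : Set Str) (hAfin : A.Finite) (hApf : PrefixFree A) (hAext : ∀ ρ ∈ A, τ <+: ρ)
    (hAbig : BigAboveF (fun n => 3 * g n) {τ} A)
    (E₀ E₁ : Str → Set Str)
    (hEfin : ∀ ρ ∈ A, (E₀ ρ).Finite ∧ (E₁ ρ).Finite)
    (hEext : ∀ ρ ∈ A, (∀ σ ∈ E₀ ρ, ρ <+: σ) ∧ (∀ σ ∈ E₁ ρ, ρ <+: σ))
    (hEbig : ∀ ρ ∈ A,
      BigAboveF (fun n => 3 * g n) {ρ} (E₀ ρ) ∧ BigAboveF (fun n => 3 * g n) {ρ} (E₁ ρ))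
    (hEsplit : ∀ ρ ∈ A, GammaSplit Γ B (E₀ ρ) (E₁ ρ))
    (F : Set Str) (hFfin : F.Finite)
    (hFbig : BigAboveF (fun n => 3 * h n) {τs} F)
    (hlen : ∀ σ ∈ F, σ ∉ B → ∀ ν ∈ ⋃ ρ ∈ A, E₀ ρ ∪ E₁ ρ, ν ∉ B →
      (Γ ν).length < (Γ σ).length) :
    ∃ E' F' : Set Str,
      E' ⊆ (⋃ ρ ∈ A, E₀ ρ ∪ E₁ ρ) ∧ BigAboveF g {τ} E' ∧
      F' ⊆ F ∧ BigAboveF h {τs} F' ∧ GammaSplit Γ B E' F' := by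
  classical
  obtain ⟨-, -, hg2, -⟩ := hg
  obtain ⟨-, -, hh2, -⟩ := hh
  have hg1 : ∀ n, 1 ≤ g n := fun n => le_trans one_le_two (hg2 n)
  have hh1 : ∀ n, 1 ≤ h n := fun n => le_trans one_le_two (hh2 n)
  have hg3 : ∀ n, g n ≤ 3 * g n := fun n => by omega
  -- the union of all the E-sets
  set EU : Set Str := ⋃ ρ ∈ A, E₀ ρ ∪ E₁ ρ with hEUdef
  -- reverse non-prefix from the length hypothesis
  have hlen' : ∀ τ₀ ∈ EU, τ₀ ∉ B → ∀ τ₁ ∈ F, τ₁ ∉ B → ¬ Γ τ₁ <+: Γ τ₀ := by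
    intro τ₀ hτ₀ hτ₀B τ₁ hτ₁ hτ₁B hpre
    have h1 := hlen τ₁ hτ₁ hτ₁B τ₀ hτ₀ hτ₀B
    have h2 := hpre.length_le
    omega
  by_cases hFB : BigAboveF h {τs} (F ∩ B)
  · -- trivial case : F ∩ B is h-big
    refine ⟨⋃ ρ ∈ A, E₀ ρ, F ∩ B, ?_, ?_, Set.inter_subset_left, hFB, ?_⟩
    · intro x hx
      obtain ⟨ρ, hρ, hx⟩ := Set.mem_iUnion₂.mp hx
      exact Set.mem_iUnion₂.mpr ⟨ρ, hρ, Or.inl hx⟩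
    · exact SCL.big_glue (SCL.big_mono_fun hg3 hAbig)
        (fun ρ hρ => SCL.big_mono_fun hg3 (hEbig ρ hρ).1) hg1
    · intro τ₀ _ _ τ₁ hτ₁ hτ₁B
      exact absurd hτ₁.2 hτ₁B
  -- main case
  set C : List Bool → Set Str := fun q => {s | s ∈ F ∧ s ∉ B ∧ q <+: Γ s} with hCdef
  have hYbig : BigAboveF (fun n => 2 * h n + 1) {τs} (C []) := by
    have hcov : F ⊆ (F ∩ B) ∪ C [] := by
      intro s hs
      by_cases hB : s ∈ B
      · exact Or.inl ⟨hs, hB⟩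
      · exact Or.inr ⟨hs, hB, List.nil_prefix⟩
    rcases SCL.cover_two (f₁ := h) (f₂ := fun n => 2 * h n + 1) hFbig hcov
      (fun n => by first | (dsimp only; omega) | omega) hh1 (fun n => by first | (dsimp only; omega) | omega) with hc | hc
    · exact absurd hc hFB
    · exact hc
  set V : Set (List Bool) := {q | BigAboveF (fun n => 2 * h n + 1) {τs} (C q)} with hVdef
  have hVne : V.Nonempty := ⟨[], hYbig⟩
  have hVfin : V.Finite := by
    apply Set.Finite.subset (hFfin.biUnion (fun s _ => SCL.finite_prefixes (Γ s)))
    intro q hq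
    obtain ⟨s, hs⟩ := SCL.big_nonempty hq
    exact Set.mem_biUnion hs.1 hs.2.2
  obtain ⟨p, hpV, hpmax⟩ := hVfin.exists_maximalFor List.length V hVne
  have hchild : ∀ b : Bool, ¬ BigAboveF (fun n => 2 * h n + 1) {τs} (C (p ++ [b])) := by
    intro b hb
    have := hpmax hb (by simp)
    simp at this
  -- per-ρ side selection : the side with no non-B value below p
  set ES : Str → Set Str := fun ρ =>
    if ∃ ν ∈ E₀ ρ, ν ∉ B ∧ Γ ν <+: p then E₁ ρ else E₀ ρ with hESdef
  have hESbig : ∀ ρ ∈ A, BigAboveF (fun n => 3 * g n) {ρ} (ES ρ) := by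
    intro ρ hρ
    simp only [hESdef]
    split
    · exact (hEbig ρ hρ).2
    · exact (hEbig ρ hρ).1
  have hESsub : ∀ ρ, ES ρ ⊆ E₀ ρ ∪ E₁ ρ := by
    intro ρ
    simp only [hESdef]
    split
    · exact Set.subset_union_right
    · exact Set.subset_union_left
  have hchainfree : ∀ ρ ∈ A, ∀ ν ∈ ES ρ, ν ∉ B → ¬ Γ ν <+: p := by
    intro ρ hρ ν hν hνB hpre
    simp only [hESdef] at hν
    by_cases hc : ∃ ν' ∈ E₀ ρ, ν' ∉ B ∧ Γ ν' <+: p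
    · rw [if_pos hc] at hν
      obtain ⟨ν₀, hν₀, hν₀B, hν₀p⟩ := hc
      have hsp := hEsplit ρ hρ ν₀ hν₀ hν₀B ν hν hνB
      rcases List.prefix_or_prefix_of_prefix hν₀p hpre with hp | hp
      · exact hsp.1 hp
      · exact hsp.2 hp
    · rw [if_neg hc] at hν
      exact hc ⟨ν, hν, hνB, hpre⟩
  -- the three-way partition of each chosen side
  set P1 : Str → Set Str := fun ρ => {ν ∈ ES ρ | ν ∈ B ∨ (¬ Γ ν <+: p ∧ ¬ p <+: Γ ν)}
    with hP1def
  set P2 : Str → Set Str := fun ρ => {ν ∈ ES ρ | (p ++ [false]) <+: Γ ν} with hP2def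
  set P3 : Str → Set Str := fun ρ => {ν ∈ ES ρ | (p ++ [true]) <+: Γ ν} with hP3def
  have hcover : ∀ ρ ∈ A, ES ρ ⊆ P1 ρ ∪ (P2 ρ ∪ P3 ρ) := by
    intro ρ hρ ν hν
    by_cases hB : ν ∈ B
    · exact Or.inl ⟨hν, Or.inl hB⟩
    by_cases hp1 : p <+: Γ ν
    · have hne : Γ ν ≠ p := by
        intro he
        exact hchainfree ρ hρ ν hν hB (he ▸ List.prefix_refl _)
      obtain ⟨rest, hrest⟩ := hp1
      rcases rest with - | ⟨b, rest'⟩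
      · exact absurd (by rw [← hrest]; simp) hne
      · have hbp : (p ++ [b]) <+: Γ ν := ⟨rest', by rw [← hrest]; simp⟩
        cases b
        · exact Or.inr (Or.inl ⟨hν, hbp⟩)
        · exact Or.inr (Or.inr ⟨hν, hbp⟩)
    · exact Or.inl ⟨hν, Or.inr ⟨hchainfree ρ hρ ν hν hB, hp1⟩⟩
  have hPbig : ∀ ρ ∈ A,
      BigAboveF g {ρ} (P1 ρ) ∨ BigAboveF g {ρ} (P2 ρ) ∨ BigAboveF g {ρ} (P3 ρ) := by
    intro ρ hρ
    rcases SCL.cover_two (f₁ := g) (f₂ := fun n => 2 * g n - 1) (hESbig ρ hρ)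
      (hcover ρ hρ) (fun n => by have := hg2 n; first | (dsimp only; omega) | omega) hg1
      (fun n => by have := hg2 n; first | (dsimp only; omega) | omega) with hc | hc
    · exact Or.inl hc
    · rcases SCL.cover_two (f₁ := g) (f₂ := g) hc subset_rfl
        (fun n => by have := hg2 n; first | (dsimp only; omega) | omega) hg1 hg1 with hc2 | hc2
      · exact Or.inr (Or.inl hc2)
      · exact Or.inr (Or.inr hc2)
  -- class of each ρ and its chosen g-big subset
  set cls : Str → ℕ := fun ρ => if BigAboveF g {ρ} (P1 ρ) then 1
    else if BigAboveF g {ρ} (P2 ρ) then 2 else 3 with hclsdef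
  set PD : Str → Set Str := fun ρ =>
    if cls ρ = 1 then P1 ρ else if cls ρ = 2 then P2 ρ else P3 ρ with hPDdef
  have hPD : ∀ ρ ∈ A, BigAboveF g {ρ} (PD ρ) := by
    intro ρ hρ
    simp only [hPDdef, hclsdef]
    by_cases h1 : BigAboveF g {ρ} (P1 ρ)
    · simp [h1]
    · by_cases h2 : BigAboveF g {ρ} (P2 ρ)
      · simp [h1, h2]
      · simp [h1, h2]
        rcases hPbig ρ hρ with hc | hc | hc
        · exact absurd hc h1
        · exact absurd hc h2
        · exact hc
  have hPDsub : ∀ ρ, PD ρ ⊆ ES ρ := by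
    intro ρ
    simp only [hPDdef]
    split
    · exact Set.sep_subset _ _
    split
    · exact Set.sep_subset _ _
    · exact Set.sep_subset _ _
  -- partition A by class
  set A1 : Set Str := {ρ ∈ A | cls ρ = 1} with hA1def
  set A2 : Set Str := {ρ ∈ A | cls ρ = 2} with hA2def
  set A3 : Set Str := {ρ ∈ A | cls ρ = 3} with hA3def
  have hAcover : A ⊆ A1 ∪ (A2 ∪ A3) := by
    intro ρ hρ
    simp only [hclsdef, hA1def, hA2def, hA3def]
    by_cases h1 : BigAboveF g {ρ} (P1 ρ)
    · exact Or.inl ⟨hρ, by simp [hclsdef, h1]⟩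
    by_cases h2 : BigAboveF g {ρ} (P2 ρ)
    · exact Or.inr (Or.inl ⟨hρ, by simp [hclsdef, h1, h2]⟩)
    · exact Or.inr (Or.inr ⟨hρ, by simp [hclsdef, h1, h2]⟩)
  have hAJ : BigAboveF g {τ} A1 ∨ BigAboveF g {τ} A2 ∨ BigAboveF g {τ} A3 := by
    rcases SCL.cover_two (f₁ := g) (f₂ := fun n => 2 * g n - 1) hAbig hAcover
      (fun n => by have := hg2 n; first | (dsimp only; omega) | omega) hg1
      (fun n => by have := hg2 n; first | (dsimp only; omega) | omega) with hc | hc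
    · exact Or.inl hc
    · rcases SCL.cover_two (f₁ := g) (f₂ := g) hc subset_rfl
        (fun n => by have := hg2 n; first | (dsimp only; omega) | omega) hg1 hg1 with hc2 | hc2
      · exact Or.inr (Or.inl hc2)
      · exact Or.inr (Or.inr hc2)
  -- common facts for assembling E'
  have hE'sub : ∀ AJ : Set Str, AJ ⊆ A → (⋃ ρ ∈ AJ, PD ρ) ⊆ EU := by
    intro AJ hAJsub x hx
    obtain ⟨ρ, hρ, hx⟩ := Set.mem_iUnion₂.mp hx
    exact Set.mem_iUnion₂.mpr ⟨ρ, hAJsub hρ, hESsub ρ (hPDsub ρ hx)⟩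
  rcases hAJ with hAj | hAj | hAj
  · -- class 1 : values incomparable with p ; F' := C p
    refine ⟨⋃ ρ ∈ A1, PD ρ, C p, hE'sub A1 (Set.sep_subset _ _), ?_, ?_, ?_, ?_⟩
    · exact SCL.big_glue hAj (fun ρ hρ => hPD ρ hρ.1) hg1
    · intro s hs; exact hs.1
    · exact SCL.big_mono_fun (fun n => by first | (dsimp only; omega) | omega) hpV
    · intro τ₀ hτ₀ hτ₀B τ₁ hτ₁ hτ₁B
      obtain ⟨ρ, hρ, hτ₀'⟩ := Set.mem_iUnion₂.mp hτ₀
      have hP1m : τ₀ ∈ P1 ρ := by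
        have := hτ₀'
        rw [hPDdef] at this
        simp only [hρ.2, if_pos] at this
        exact this
      have hinc : ¬ Γ τ₀ <+: p ∧ ¬ p <+: Γ τ₀ := by
        rcases hP1m.2 with hB | hinc
        · exact absurd hB hτ₀B
        · exact hinc
      constructor
      · intro hpre
        rcases List.prefix_or_prefix_of_prefix hpre hτ₁.2.2 with hp | hp
        · exact hinc.1 hp
        · exact hinc.2 hp
      · exact hlen' τ₀ (hE'sub A1 (Set.sep_subset _ _) hτ₀) hτ₀B τ₁ hτ₁.1 hτ₁B
  · -- class 2 : values extend p0 ; F' := F minus the cone of p0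
    refine ⟨⋃ ρ ∈ A2, PD ρ, {s ∈ F | s ∈ B ∨ ¬ (p ++ [false]) <+: Γ s},
      hE'sub A2 (Set.sep_subset _ _), ?_, Set.sep_subset _ _, ?_, ?_⟩
    · exact SCL.big_glue hAj (fun ρ hρ => hPD ρ hρ.1) hg1
    · have hcov : F ⊆ {s ∈ F | s ∈ B ∨ ¬ (p ++ [false]) <+: Γ s} ∪ C (p ++ [false]) := by
        intro s hs
        by_cases hB : s ∈ B
        · exact Or.inl ⟨hs, Or.inl hB⟩
        by_cases hp0 : (p ++ [false]) <+: Γ s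
        · exact Or.inr ⟨hs, hB, hp0⟩
        · exact Or.inl ⟨hs, Or.inr hp0⟩
      rcases SCL.cover_two (f₁ := h) (f₂ := fun n => 2 * h n + 1) hFbig hcov
        (fun n => by first | (dsimp only; omega) | omega) hh1 (fun n => by first | (dsimp only; omega) | omega) with hc | hc
      · exact hc
      · exact absurd hc (hchild false)
    · intro τ₀ hτ₀ hτ₀B τ₁ hτ₁ hτ₁B
      obtain ⟨ρ, hρ, hτ₀'⟩ := Set.mem_iUnion₂.mp hτ₀
      have hP2m : τ₀ ∈ P2 ρ := by
        have := hτ₀'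
        rw [hPDdef] at this
        have hc1 : cls ρ ≠ 1 := by rw [hρ.2]; omega
        simp only [hρ.2, if_neg hc1, if_pos] at this
        exact this
      have hτ₁' : ¬ (p ++ [false]) <+: Γ τ₁ := by
        rcases hτ₁.2 with hB | hior
        · exact absurd hB hτ₁B
        · exact hior
      constructor
      · intro hpre
        exact hτ₁' (hP2m.2.trans hpre)
      · exact hlen' τ₀ (hE'sub A2 (Set.sep_subset _ _) hτ₀) hτ₀B τ₁ hτ₁.1 hτ₁B
  · -- class 3 : values extend p1 ; F' := F minus the cone of p1
    refine ⟨⋃ ρ ∈ A3, PD ρ, {s ∈ F | s ∈ B ∨ ¬ (p ++ [true]) <+: Γ s},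
      hE'sub A3 (Set.sep_subset _ _), ?_, Set.sep_subset _ _, ?_, ?_⟩
    · exact SCL.big_glue hAj (fun ρ hρ => hPD ρ hρ.1) hg1
    · have hcov : F ⊆ {s ∈ F | s ∈ B ∨ ¬ (p ++ [true]) <+: Γ s} ∪ C (p ++ [true]) := by
        intro s hs
        by_cases hB : s ∈ B
        · exact Or.inl ⟨hs, Or.inl hB⟩
        by_cases hp0 : (p ++ [true]) <+: Γ s
        · exact Or.inr ⟨hs, hB, hp0⟩
        · exact Or.inl ⟨hs, Or.inr hp0⟩
      rcases SCL.cover_two (f₁ := h) (f₂ := fun n => 2 * h n + 1) hFbig hcov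
        (fun n => by first | (dsimp only; omega) | omega) hh1 (fun n => by first | (dsimp only; omega) | omega) with hc | hc
      · exact hc
      · exact absurd hc (hchild true)
    · intro τ₀ hτ₀ hτ₀B τ₁ hτ₁ hτ₁B
      obtain ⟨ρ, hρ, hτ₀'⟩ := Set.mem_iUnion₂.mp hτ₀
      have hP3m : τ₀ ∈ P3 ρ := by
        have := hτ₀'
        rw [hPDdef] at this
        have hc1 : cls ρ ≠ 1 := by rw [hρ.2]; omega
        have hc2 : cls ρ ≠ 2 := by rw [hρ.2]; omega
        simp only [if_neg hc1, if_neg hc2] at this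
        exact this
      have hτ₁' : ¬ (p ++ [true]) <+: Γ τ₁ := by
        rcases hτ₁.2 with hB | hior
        · exact absurd hB hτ₁B
        · exact hior
      constructor
      · intro hpre
        exact hτ₁' (hP3m.2.trans hpre)
      · exact hlen' τ₀ (hE'sub A3 (Set.sep_subset _ _) hτ₀) hτ₀B τ₁ hτ₁.1 hτ₁B
end

section
/- Let A be a finite prefix-free set of pairs of strings, let g and h be bounding functions, and let B be a set of pairs of strings. Then the following are equivalent: (1) there is a finite (g,h)-bushy forest system above A all of whose leaves lie in B; (2) the set of strings τ such that B(τ) is h-big above A(τ⁻) is g-big above dom A, where τ⁻ denotes the unique element of dom A that τ extends. -/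
/-- The section `T(τ) = {ρ : (τ, ρ) ∈ T}` of a set of pairs of strings. -/
def sec (T : Set (Str × Str)) (τ : Str) : Set Str := {ρ | (τ, ρ) ∈ T}

/-- The domain `{τ : T(τ) ≠ ∅}` of a set of pairs of strings. -/
def domP (T : Set (Str × Str)) : Set Str := {τ | ∃ ρ, (τ, ρ) ∈ T}

/-- A set of pairs of strings is prefix-free if its domain is prefix-free and
each of its sections is prefix-free. -/
def PrefixFree2 (A : Set (Str × Str)) : Prop :=
  PrefixFree (domP A) ∧ ∀ τ ∈ domP A, PrefixFree (sec A τ)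

/-- A length-2 forest system above the finite prefix-free set `A` of pairs of
strings: `dom T` is a forest above `dom A`; for every `τ ∈ dom T`, `T(τ)` is a
finite forest above `A(τ⁻)`, where `τ⁻` is the (unique) element of `dom A` that
`τ` extends; and `T(τ')` end-extends `T(τ)` whenever `τ ≼ τ'` in `dom T`. -/
def IsForestSys (A T : Set (Str × Str)) : Prop :=
  IsForestAbove (domP A) (domP T) ∧
  (∀ τ ∈ domP T, (sec T τ).Finite ∧
    ∀ σ ∈ domP A, σ <+: τ → IsForestAbove (sec A σ) (sec T τ)) ∧
  ∀ τ ∈ domP T, ∀ τ' ∈ domP T, τ <+: τ' → EndExt (sec T τ) (sec T τ')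

/-- A forest system is `(g, h)`-bushy if its domain is `g`-bushy and each of its
sections is `h`-bushy. -/
def Bushy2 (g h : ℕ → ℕ) (T : Set (Str × Str)) : Prop :=
  Bushy g (domP T) ∧ ∀ τ ∈ domP T, Bushy h (sec T τ)

/-- A leaf of a forest system: a pair `(τ, ρ)` with `τ` a leaf of `dom T` and
`ρ` a leaf of `T(τ)`. -/
def IsLeaf2 (T : Set (Str × Str)) (p : Str × Str) : Prop :=
  IsLeaf (domP T) p.1 ∧ IsLeaf (sec T p.1) p.2

/-- `B` is `(g, h)`-big above the finite prefix-free set `A` of pairs of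
strings: some finite `(g, h)`-bushy forest system above `A` has all of its
leaves in `B`. -/
def BigAboveF2 (g h : ℕ → ℕ) (A B : Set (Str × Str)) : Prop :=
  ∃ T : Set (Str × Str), T.Finite ∧ IsForestSys A T ∧ Bushy2 g h T ∧
    ∀ p : Str × Str, IsLeaf2 T p → p ∈ B

/-- `B` is `(g, h)`-big above an arbitrary set `A` of pairs of strings: `B` is
`(g, h)`-big above every finite prefix-free subset of `A`. -/
def BigAbove2 (g h : ℕ → ℕ) (A B : Set (Str × Str)) : Prop :=
  ∀ A' : Set (Str × Str), A' ⊆ A → A'.Finite → PrefixFree2 A' → BigAboveF2 g h A' B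

/-- A set of pairs of strings is open if it is upwards closed under
coordinatewise extension. -/
def Open2 (C : Set (Str × Str)) : Prop :=
  ∀ p ∈ C, ∀ q : Str × Str, p.1 <+: q.1 → p.2 <+: q.2 → q ∈ C

-- auxiliary lemmas (to be inserted above the theorem)

lemma prefix_unique {D : Set Str} (hD : PrefixFree D) {σ σ' τ : Str}
    (h1 : σ ∈ D) (h2 : σ' ∈ D) (p1 : σ <+: τ) (p2 : σ' <+: τ) : σ = σ' := by
  rcases List.prefix_or_prefix_of_prefix p1 p2 with h | h
  · exact hD σ h1 σ' h2 h
  · exact (hD σ' h2 σ h1 h).symm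

lemma leaf_self {D : Set Str} (hD : PrefixFree D) {σ : Str} (h : σ ∈ D) : IsLeaf D σ :=
  ⟨h, fun ρ hρ hpre => (hD σ h ρ hρ hpre).symm⟩

lemma forest_self {D : Set Str} (hD : PrefixFree D) : IsForestAbove D D := by
  refine ⟨le_refl D, fun τ hτ => ⟨τ, hτ, List.prefix_refl τ⟩, fun σ hσ => ?_⟩
  refine ⟨⟨σ, hσ, List.prefix_refl σ⟩, fun τ hτ => hτ.2, ?_⟩
  intro τ hτ ρ hσρ hρτ
  have : σ = τ := hD σ hσ τ hτ.1 hτ.2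
  subst this
  have : σ = ρ := (hρτ.eq_of_length_le (hσρ.length_le)).symm
  exact this ▸ ⟨hσ, List.prefix_refl σ⟩

lemma bushy_of_all_leaf {f : ℕ → ℕ} {D : Set Str} (H : ∀ τ ∈ D, IsLeaf D τ) : Bushy f D :=
  fun τ hτ hnl => absurd (H τ hτ) hnl

lemma bushy_pf {f : ℕ → ℕ} {D : Set Str} (hD : PrefixFree D) : Bushy f D :=
  bushy_of_all_leaf (fun _ hτ => leaf_self hD hτ)

lemma endext_refl (X : Set Str) : EndExt X X :=
  ⟨le_refl X, fun τ hτ hn => absurd hτ hn⟩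

lemma endext_of_forest {D F : Set Str} (hD : PrefixFree D) (hF : IsForestAbove D F) :
    EndExt D F := by
  refine ⟨hF.1, fun τ hτ _ => ?_⟩
  obtain ⟨σ, hσ, hpre⟩ := hF.2.1 hτ
  exact ⟨σ, leaf_self hD hσ, hpre⟩

lemma sec_finite {T : Set (Str × Str)} (hT : T.Finite) (τ : Str) : (sec T τ).Finite := by
  apply (hT.image Prod.snd).subset
  intro ρ hρ
  exact ⟨(τ, ρ), hρ, rfl⟩

lemma domP_finite {T : Set (Str × Str)} (hT : T.Finite) : (domP T).Finite := by
  apply (hT.image Prod.fst).subset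
  rintro τ ⟨ρ, hρ⟩
  exact ⟨(τ, ρ), hρ, rfl⟩


/-- `B` is `(g, h)`-big above the finite prefix-free set `A` of pairs of
strings if and only if the set of strings `τ` such that `B(τ)` is `h`-big above
`A(τ⁻)` is `g`-big above `dom A`. -/
theorem big_for_pairs_iff_projection_big (g h : ℕ → ℕ) (hg : Bounding g) (hh : Bounding h)
    (A : Set (Str × Str)) (hAfin : A.Finite) (hApf : PrefixFree2 A)
    (B : Set (Str × Str)) :
    BigAboveF2 g h A B ↔
      BigAboveF g (domP A)
        {τ | ∃ σ ∈ domP A, σ <+: τ ∧ BigAboveF h (sec A σ) (sec B τ)} := by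
  classical
  constructor
  · rintro ⟨T, hTfin, ⟨hdom, hsecs, hee⟩, ⟨hbg, hbh⟩, hleaf⟩
    refine ⟨domP T, domP_finite hTfin, hdom, hbg, ?_⟩
    intro τ hτl
    obtain ⟨σ, hσ, hpre⟩ := hdom.2.1 hτl.1
    refine ⟨σ, hσ, hpre, sec T τ, (hsecs τ hτl.1).1, (hsecs τ hτl.1).2 σ hσ hpre,
      hbh τ hτl.1, ?_⟩
    intro ρ hρl
    exact hleaf (τ, ρ) ⟨hτl, hρl⟩
  · rintro ⟨S, hSfin, hSforest, hSbushy, hSleaves⟩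
    have key : ∀ τ : Str, ∃ Fτ : Set Str, τ ∈ S →
        Fτ.Finite ∧ Fτ.Nonempty ∧
        (∀ σ ∈ domP A, σ <+: τ → IsForestAbove (sec A σ) Fτ) ∧
        Bushy h Fτ ∧
        (∀ σ ∈ domP A, σ <+: τ → EndExt (sec A σ) Fτ) ∧
        (IsLeaf S τ → ∀ ρ, IsLeaf Fτ ρ → ρ ∈ sec B τ) ∧
        (¬ IsLeaf S τ → ∀ σ ∈ domP A, σ <+: τ → Fτ = sec A σ) := by
      intro τ
      by_cases hτS : τ ∈ S
      swap
      · exact ⟨∅, fun h => absurd h hτS⟩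
      obtain ⟨σ₀, hσ₀, hpre₀⟩ := hSforest.2.1 hτS
      have hσ₀pf : PrefixFree (sec A σ₀) := hApf.2 σ₀ hσ₀
      have hσ₀ne : (sec A σ₀).Nonempty := hσ₀
      by_cases hleaf : IsLeaf S τ
      · obtain ⟨σ₁, hσ₁, hpre₁, T', hT'fin, hT'forest, hT'bushy, hT'leaves⟩ :=
          hSleaves τ hleaf
        have hσ₁ne : (sec A σ₁).Nonempty := hσ₁
        obtain ⟨ρ₁, hρ₁⟩ := hσ₁ne
        refine ⟨T', fun _ => ⟨hT'fin, ⟨ρ₁, hT'forest.1 hρ₁⟩, ?_, hT'bushy, ?_,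
          fun _ => hT'leaves, fun hn => absurd hleaf hn⟩⟩
        · intro σ hσA hσpre
          obtain rfl := prefix_unique hApf.1 hσA hσ₁ hσpre hpre₁
          exact hT'forest
        · intro σ hσA hσpre
          obtain rfl := prefix_unique hApf.1 hσA hσ₁ hσpre hpre₁
          exact endext_of_forest (hApf.2 σ hσA) hT'forest
      · refine ⟨sec A σ₀, fun _ => ⟨sec_finite hAfin σ₀, hσ₀ne, ?_, bushy_pf hσ₀pf, ?_,
          fun hl => absurd hl hleaf, ?_⟩⟩
        · intro σ hσA hσpre
          obtain rfl := prefix_unique hApf.1 hσA hσ₀ hσpre hpre₀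
          exact forest_self hσ₀pf
        · intro σ hσA hσpre
          obtain rfl := prefix_unique hApf.1 hσA hσ₀ hσpre hpre₀
          exact endext_refl _
        · intro _ σ hσA hσpre
          obtain rfl := prefix_unique hApf.1 hσA hσ₀ hσpre hpre₀
          rfl
    choose F hF using key
    set T : Set (Str × Str) := {p | p.1 ∈ S ∧ p.2 ∈ F p.1} with hTdef
    have hsec : ∀ τ ∈ S, sec T τ = F τ := by
      intro τ hτ
      ext ρ
      simp only [sec, hTdef, Set.mem_setOf_eq, hτ, true_and]
    have hdomT : domP T = S := by
      ext τ
      constructor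
      · rintro ⟨ρ, hρ⟩
        exact hρ.1
      · intro hτ
        obtain ⟨ρ, hρ⟩ := (hF τ hτ).2.1
        exact ⟨ρ, hτ, hρ⟩
    have hTfin : T.Finite := by
      apply Set.Finite.subset
        (hSfin.biUnion (fun τ (hτ : τ ∈ S) => ((hF τ hτ).1.image (fun ρ => (τ, ρ)))))
      rintro ⟨τ, ρ⟩ ⟨hτ, hρ⟩
      exact Set.mem_biUnion hτ ⟨ρ, hρ, rfl⟩
    refine ⟨T, hTfin, ⟨?_, ?_, ?_⟩, ⟨?_, ?_⟩, ?_⟩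
    · rw [hdomT]
      exact hSforest
    · intro τ hτ
      have hτS : τ ∈ S := hdomT ▸ hτ
      rw [hsec τ hτS]
      exact ⟨(hF τ hτS).1, fun σ hσ hpre => (hF τ hτS).2.2.1 σ hσ hpre⟩
    · intro τ hτ τ' hτ' hpre
      have hτS : τ ∈ S := hdomT ▸ hτ
      have hτ'S : τ' ∈ S := hdomT ▸ hτ'
      rw [hsec τ hτS, hsec τ' hτ'S]
      by_cases hleaf : IsLeaf S τ
      · obtain rfl : τ' = τ := hleaf.2 τ' hτ'S hpre
        exact endext_refl _
      · obtain ⟨σ₀, hσ₀, hpre₀⟩ := hSforest.2.1 hτS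
        rw [(hF τ hτS).2.2.2.2.2.2 hleaf σ₀ hσ₀ hpre₀]
        exact (hF τ' hτ'S).2.2.2.2.1 σ₀ hσ₀ (hpre₀.trans hpre)
    · rw [hdomT]
      exact hSbushy
    · intro τ hτ
      have hτS : τ ∈ S := hdomT ▸ hτ
      rw [hsec τ hτS]
      exact (hF τ hτS).2.2.2.1
    · rintro ⟨τ, ρ⟩ ⟨hτl, hρl⟩
      have hτS : τ ∈ S := hdomT ▸ hτl.1
      have hleafS : IsLeaf S τ := hdomT ▸ hτl
      rw [hsec τ hτS] at hρl
      exact (hF τ hτS).2.2.2.2.2.1 hleafS ρ hρl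
end

section
/- Let 𝓑 be a finite collection of open sets of strings, let g be a bounding function, and let A be a finite prefix-free set of strings. Suppose that each B ∈ 𝓑 is g-big above every string σ ∈ A^≼. Then the intersection ⋂𝓑 is g-big above A. -/
/-- A set of strings is open if it is upwards closed under extension. -/
def OpenStr (B : Set Str) : Prop := ∀ σ ∈ B, ∀ τ : Str, σ <+: τ → τ ∈ B

private lemma pref_antisymm {σ τ : Str} (h1 : σ <+: τ) (h2 : τ <+: σ) : σ = τ :=
  h1.eq_of_length (le_antisymm h1.length_le h2.length_le)

/-- Gluing lemma: attach a forest at each leaf of a forest. -/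
private lemma glue_s18 (g : ℕ → ℕ) (A T : Set Str) (hTfin : T.Finite)
    (hTf : IsForestAbove A T) (hTb : Bushy g T) (S : Str → Set Str)
    (hS : ∀ τ, IsLeaf T τ → (S τ).Finite ∧ IsForestAbove {τ} (S τ) ∧ Bushy g (S τ)) :
    ∃ U : Set Str, U.Finite ∧ IsForestAbove A U ∧ Bushy g U ∧
      ∀ ρ, IsLeaf U ρ → ∃ τ, IsLeaf T τ ∧ IsLeaf (S τ) ρ ∧ τ <+: ρ := by
  classical
  set U : Set Str := T ∪ ⋃ τ ∈ {τ | IsLeaf T τ}, S τ with hU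
  have hSpre : ∀ τ, IsLeaf T τ → ∀ ρ ∈ S τ, τ <+: ρ := by
    intro τ hτ ρ hρ
    obtain ⟨σ, hσ, hpre⟩ := (hS τ hτ).2.1.2.1 hρ
    rcases hσ with rfl
    exact hpre
  have hτSelf : ∀ τ, IsLeaf T τ → τ ∈ S τ := fun τ hτ => (hS τ hτ).2.1.1 rfl
  have hmemU : ∀ ρ, ρ ∈ U ↔ ρ ∈ T ∨ ∃ τ, IsLeaf T τ ∧ ρ ∈ S τ := by
    intro ρ; simp only [hU, Set.mem_union, Set.mem_iUnion, Set.mem_setOf_eq, exists_prop]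
  -- leaves of pieces are leaves of U
  have hleafU : ∀ τ ρ, IsLeaf T τ → IsLeaf (S τ) ρ → IsLeaf U ρ := by
    intro τ ρ hτ hρ
    have hτρ : τ <+: ρ := hSpre τ hτ ρ hρ.1
    refine ⟨(hmemU ρ).2 (Or.inr ⟨τ, hτ, hρ.1⟩), ?_⟩
    intro υ hυ hpre
    rcases (hmemU υ).1 hυ with hυT | ⟨τ', hτ', hυS⟩
    · have heq : υ = τ := hτ.2 υ hυT (hτρ.trans hpre)
      subst heq
      exact (pref_antisymm hpre hτρ).symm
    · have hτ'υ : τ' <+: υ := hSpre τ' hτ' υ hυS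
      have hcomp := List.prefix_or_prefix_of_prefix (hτρ.trans hpre) hτ'υ
      have heq : τ = τ' := by
        rcases hcomp with h | h
        · exact (hτ.2 τ' hτ'.1 h).symm
        · exact hτ'.2 τ hτ.1 h
      subst heq
      exact hρ.2 υ hυS hpre
  have hUfin : U.Finite := by
    refine hTfin.union (Set.Finite.biUnion (hTfin.subset (fun τ h => h.1))
      (fun τ hτ => (hS τ hτ).1))
  have hUforest : IsForestAbove A U := by
    refine ⟨hTf.1.trans Set.subset_union_left, ?_, ?_⟩
    · intro ρ hρ
      rcases (hmemU ρ).1 hρ with hT | ⟨τ, hτ, hρS⟩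
      · exact hTf.2.1 hT
      · obtain ⟨σ, hσ, hpre⟩ := hTf.2.1 hτ.1
        exact ⟨σ, hσ, hpre.trans (hSpre τ hτ ρ hρS)⟩
    · intro σ hσ
      refine ⟨⟨σ, (hmemU σ).2 (Or.inl (hTf.1 hσ)), List.prefix_refl σ⟩,
        fun τ h => h.2, ?_⟩
      intro υ hυ ρ hσρ hρυ
      refine ⟨?_, hσρ⟩
      rcases (hmemU υ).1 hυ.1 with hυT | ⟨τ', hτ', hυS⟩
      · have := (hTf.2.2 σ hσ).2.2 υ ⟨hυT, hσρ.trans hρυ⟩ ρ hσρ hρυ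
        exact (hmemU ρ).2 (Or.inl this.1)
      · have hτ'υ : τ' <+: υ := hSpre τ' hτ' υ hυS
        rcases List.prefix_or_prefix_of_prefix hρυ hτ'υ with h | h
        · have := (hTf.2.2 σ hσ).2.2 τ' ⟨hτ'.1, hσρ.trans h⟩ ρ hσρ h
          exact (hmemU ρ).2 (Or.inl this.1)
        · have htree := (hS τ' hτ').2.1.2.2 τ' rfl
          have := htree.2.2 υ ⟨hυS, hτ'υ⟩ ρ h hρυ
          exact (hmemU ρ).2 (Or.inr ⟨τ', hτ', this.1⟩)
  have hsubfin : ∀ ρ : Str, ({x ∈ U | ρ <+: x ∧ x.length = ρ.length + 1}).Finite :=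
    fun ρ => hUfin.subset (fun x hx => hx.1)
  have hUbushy : Bushy g U := by
    intro ρ hρU hnl
    rcases (hmemU ρ).1 hρU with hT | ⟨τ, hτ, hρS⟩
    · by_cases hleafT : IsLeaf T ρ
      · have hρS : ρ ∈ S ρ := hτSelf ρ hleafT
        have hnlS : ¬ IsLeaf (S ρ) ρ := fun h => hnl (hleafU ρ ρ hleafT h)
        refine ((hS ρ hleafT).2.2 ρ hρS hnlS).trans (Set.ncard_le_ncard ?_ (hsubfin ρ))
        intro x hx
        exact ⟨(hmemU x).2 (Or.inr ⟨ρ, hleafT, hx.1⟩), hx.2⟩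
      · refine (hTb ρ hT hleafT).trans (Set.ncard_le_ncard ?_ (hsubfin ρ))
        intro x hx
        exact ⟨(hmemU x).2 (Or.inl hx.1), hx.2⟩
    · have hnlS : ¬ IsLeaf (S τ) ρ := fun h => hnl (hleafU τ ρ hτ h)
      refine ((hS τ hτ).2.2 ρ hρS hnlS).trans (Set.ncard_le_ncard ?_ (hsubfin ρ))
      intro x hx
      exact ⟨(hmemU x).2 (Or.inr ⟨τ, hτ, hx.1⟩), hx.2⟩
  refine ⟨U, hUfin, hUforest, hUbushy, ?_⟩
  intro ρ hρ
  rcases (hmemU ρ).1 hρ.1 with hT | ⟨τ, hτ, hρS⟩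
  · have hleafT : IsLeaf T ρ :=
      ⟨hT, fun υ hυ h => hρ.2 υ ((hmemU υ).2 (Or.inl hυ)) h⟩
    refine ⟨ρ, hleafT, ⟨hτSelf ρ hleafT, ?_⟩, List.prefix_refl ρ⟩
    intro υ hυ h
    exact hρ.2 υ ((hmemU υ).2 (Or.inr ⟨ρ, hleafT, hυ⟩)) h
  · exact ⟨τ, hτ, ⟨hρS, fun υ hυ h => hρ.2 υ ((hmemU υ).2 (Or.inr ⟨τ, hτ, hυ⟩)) h⟩,
      hSpre τ hτ ρ hρS⟩

/-- The trivial forest: a prefix-free set is a forest above itself, with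
all of its elements being leaves. -/
private lemma trivial_forest (g : ℕ → ℕ) (A : Set Str) (hApf : PrefixFree A) :
    IsForestAbove A A ∧ Bushy g A ∧ ∀ σ, IsLeaf A σ ↔ σ ∈ A := by
  have hleaf : ∀ σ ∈ A, IsLeaf A σ :=
    fun σ hσ => ⟨hσ, fun τ hτ h => (hApf σ hσ τ hτ h).symm⟩
  refine ⟨⟨subset_rfl, fun σ hσ => ⟨σ, hσ, List.prefix_refl σ⟩, ?_⟩, ?_, ?_⟩
  · intro σ hσ
    refine ⟨⟨σ, hσ, List.prefix_refl σ⟩, fun τ h => h.2, ?_⟩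
    intro τ hτ ρ hσρ hρτ
    have : σ = τ := hApf σ hσ τ hτ.1 hτ.2
    subst this
    have : ρ = σ := pref_antisymm hρτ hσρ
    subst this
    exact hτ
  · intro σ hσ hnl
    exact absurd (hleaf σ hσ) hnl
  · exact fun σ => ⟨fun h => h.1, hleaf σ⟩

private lemma aux_main (g : ℕ → ℕ) (𝓑 : Set (Set Str)) (h𝓑 : 𝓑.Finite) :
    (∀ B ∈ 𝓑, OpenStr B) → ∀ A : Set Str, A.Finite → PrefixFree A →
    (∀ B ∈ 𝓑, ∀ σ ∈ above A, BigAboveF g {σ} B) → BigAboveF g A (⋂₀ 𝓑) := by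
  classical
  refine Set.Finite.induction_on (motive := fun 𝓑 _ => (∀ B ∈ 𝓑, OpenStr B) → ∀ A : Set Str, A.Finite → PrefixFree A →
    (∀ B ∈ 𝓑, ∀ σ ∈ above A, BigAboveF g {σ} B) → BigAboveF g A (⋂₀ 𝓑)) 𝓑 h𝓑 ?_ ?_
  · intro _ A hA hApf _
    obtain ⟨hf, hb, hl⟩ := trivial_forest g A hApf
    exact ⟨A, hA, hf, hb, fun τ _ => by simp⟩
  · intro B 𝓑' hBnot h𝓑' IH hopen A hA hApf hbig
    obtain ⟨T, hTfin, hTf, hTb, hTleaf⟩ :=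
      IH (fun C hC => hopen C (Set.mem_insert_iff.2 (Or.inr hC))) A hA hApf
        (fun C hC σ hσ => hbig C (Set.mem_insert_iff.2 (Or.inr hC)) σ hσ)
    have hchoice : ∀ τ : Str, ∃ Sτ : Set Str, IsLeaf T τ →
        Sτ.Finite ∧ IsForestAbove {τ} Sτ ∧ Bushy g Sτ ∧ ∀ ρ, IsLeaf Sτ ρ → ρ ∈ B := by
      intro τ
      by_cases h : IsLeaf T τ
      · obtain ⟨Sτ, h1, h2, h3, h4⟩ := hbig B (Set.mem_insert _ _) τ (hTf.2.1 h.1)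
        exact ⟨Sτ, fun _ => ⟨h1, h2, h3, h4⟩⟩
      · exact ⟨∅, fun h' => absurd h' h⟩
    choose S hSc using hchoice
    obtain ⟨U, hUfin, hUf, hUb, hUleaf⟩ := glue_s18 g A T hTfin hTf hTb S
      (fun τ hτ => ⟨(hSc τ hτ).1, (hSc τ hτ).2.1, (hSc τ hτ).2.2.1⟩)
    refine ⟨U, hUfin, hUf, hUb, ?_⟩
    intro ρ hρ
    obtain ⟨τ, hτT, hρS, hτρ⟩ := hUleaf ρ hρ
    rw [Set.sInter_insert]
    refine ⟨(hSc τ hτT).2.2.2 ρ hρS, ?_⟩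
    intro C hC
    exact hopen C (Set.mem_insert_iff.2 (Or.inr hC)) τ (hTleaf τ hτT C hC) ρ hτρ

/-- If every member of a finite family `𝓑` of open sets of strings is `g`-big
above every string in `A^≼`, where `A` is finite and prefix-free, then `⋂ 𝓑`
is `g`-big above `A`. -/
theorem intersection_of_open_big_sets (g : ℕ → ℕ) (hg : Bounding g)
    (𝓑 : Set (Set Str)) (h𝓑 : 𝓑.Finite) (hopen : ∀ B ∈ 𝓑, OpenStr B)
    (A : Set Str) (hA : A.Finite) (hApf : PrefixFree A)
    (hbig : ∀ B ∈ 𝓑, ∀ σ ∈ above A, BigAboveF g {σ} B) :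
    BigAboveF g A (⋂₀ 𝓑) :=
  aux_main g 𝓑 h𝓑 hopen A hA hApf hbig
end
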